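/- Let n and m be non-negative integers with m = ⌊(n+3)/6⌋ + δ_{1,(n mod 6)}. For every k ∈ {0,…,⌊n/3⌋-1} of the same parity as n, let ∇_k = ρ(∇(bs_n(k, (k-n)/2))), whose (i,j)-entry equals C((k-n)/2 + j - i, k + 1 - i) + C((k+n)/2 - j, k + i - j) + C((k-n)/2 + i - 1, k + j - n) mod 2 for 1 ≤ i ≤ j ≤ n. Then, when n is even, the set {∇_{2k} : k ∈ {0,…,m-1}} is a basis of DST(n), and when n is odd, the set {U_n} ∪ {∇_{2k+1} : k ∈ {0,…,m-2}} is a basis of DST(n). -/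

import Mathlib

open Finset

namespace Steinhaus

/-- Extended binomial coefficient `C(a,b)` for integers `a`, `b`:
`C(a,0) = 1`, `C(0,b) = 0` for `b > 0`, Pascal's rule everywhere; in particular
`C(a,b) = 0` for `b < 0` and `C(a,b) = (-1)^b C(b-a-1,b)` for `a < 0 ≤ b`. -/
def ibinom (a b : ℤ) : ℤ :=
  if b < 0 then 0
  else if 0 ≤ a then (a.toNat.choose b.toNat : ℤ)
  else (-1) ^ b.toNat * ((b - a - 1).toNat.choose b.toNat : ℤ)

/-- `(i,j)` is an index of the triangle of size `n`, i.e. `1 ≤ i ≤ j ≤ n`. -/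
def InTri (n i j : ℕ) : Prop := 1 ≤ i ∧ i ≤ j ∧ j ≤ n

instance (n i j : ℕ) : Decidable (InTri n i j) :=
  inferInstanceAs (Decidable (1 ≤ i ∧ i ≤ j ∧ j ≤ n))

/-- The `ZMod 2`-vector space of binary Steinhaus triangles of size `n`,
realized as functions `ℕ → ℕ → ZMod 2` vanishing outside the triangle
`{(i,j) | 1 ≤ i ≤ j ≤ n}` and satisfying the local rule
`a i j = a (i-1) (j-1) + a (i-1) j` inside it. -/
def ST (n : ℕ) : Submodule (ZMod 2) (ℕ → ℕ → ZMod 2) where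
  carrier := {a | (∀ i j, ¬ InTri n i j → a i j = 0) ∧
    ∀ i j, 2 ≤ i → i ≤ j → j ≤ n → a i j = a (i - 1) (j - 1) + a (i - 1) j}
  add_mem' := by
    rintro a b ⟨ha0, ha1⟩ ⟨hb0, hb1⟩
    refine ⟨fun i j h => ?_, fun i j h2 hij hjn => ?_⟩
    · simp only [Pi.add_apply, ha0 i j h, hb0 i j h, add_zero]
    · simp only [Pi.add_apply, ha1 i j h2 hij hjn, hb1 i j h2 hij hjn]
      ring
  zero_mem' := ⟨fun _ _ _ => rfl, fun _ _ _ _ _ => by simp⟩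
  smul_mem' := by
    rintro c a ⟨ha0, ha1⟩
    refine ⟨fun i j h => ?_, fun i j h2 hij hjn => ?_⟩
    · simp only [Pi.smul_apply, ha0 i j h, smul_zero]
    · simp only [Pi.smul_apply, ha1 i j h2 hij hjn, smul_add]

/-- The first row of the triangle `a` (of size `n`) is the sequence `S`;
equivalently, `a = ∇S`. -/
def FirstRow (n : ℕ) (a : ℕ → ℕ → ZMod 2) (S : ℕ → ZMod 2) : Prop :=
  ∀ j, 1 ≤ j → j ≤ n → a 1 j = S j

/-- The rotation `r` by 120 degrees: `r(a)_{i,j} = a_{j-i+1, n-i+1}`. -/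
def rot (n : ℕ) (a : ℕ → ℕ → ZMod 2) : ℕ → ℕ → ZMod 2 :=
  fun i j => if InTri n i j then a (j - i + 1) (n - i + 1) else 0

/-- The horizontal reflection `h`: `h(a)_{i,j} = a_{i, n-j+i}`. -/
def hrefl (n : ℕ) (a : ℕ → ℕ → ZMod 2) : ℕ → ℕ → ZMod 2 :=
  fun i j => if InTri n i j then a i (n - j + i) else 0

lemma rot_add (n : ℕ) (a b : ℕ → ℕ → ZMod 2) :
    rot n (a + b) = rot n a + rot n b := by
  funext i j
  simp only [rot, Pi.add_apply]
  split_ifs <;> simp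

lemma rot_smul (n : ℕ) (c : ZMod 2) (a : ℕ → ℕ → ZMod 2) :
    rot n (c • a) = c • rot n a := by
  funext i j
  simp only [rot, Pi.smul_apply]
  split_ifs <;> simp

lemma hrefl_add (n : ℕ) (a b : ℕ → ℕ → ZMod 2) :
    hrefl n (a + b) = hrefl n a + hrefl n b := by
  funext i j
  simp only [hrefl, Pi.add_apply]
  split_ifs <;> simp

lemma hrefl_smul (n : ℕ) (c : ZMod 2) (a : ℕ → ℕ → ZMod 2) :
    hrefl n (c • a) = c • hrefl n a := by
  funext i j
  simp only [hrefl, Pi.smul_apply]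
  split_ifs <;> simp

/-- The linear map `ρ = r² + r + id`. -/
def rho (n : ℕ) (a : ℕ → ℕ → ZMod 2) : ℕ → ℕ → ZMod 2 :=
  rot n (rot n a) + rot n a + a

/-- The subspace of rotationally symmetric Steinhaus triangles (fixed by `r`). -/
def RST (n : ℕ) : Submodule (ZMod 2) (ℕ → ℕ → ZMod 2) where
  carrier := {a | a ∈ ST n ∧ rot n a = a}
  add_mem' := by
    rintro a b ⟨ha, ha'⟩ ⟨hb, hb'⟩
    exact ⟨add_mem ha hb, by rw [rot_add, ha', hb']⟩
  zero_mem' := ⟨zero_mem _, by funext i j; simp [rot]⟩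
  smul_mem' := by
    rintro c a ⟨ha, ha'⟩
    exact ⟨Submodule.smul_mem _ c ha, by rw [rot_smul, ha']⟩

/-- The subspace of horizontally symmetric Steinhaus triangles (fixed by `h`). -/
def HST (n : ℕ) : Submodule (ZMod 2) (ℕ → ℕ → ZMod 2) where
  carrier := {a | a ∈ ST n ∧ hrefl n a = a}
  add_mem' := by
    rintro a b ⟨ha, ha'⟩ ⟨hb, hb'⟩
    exact ⟨add_mem ha hb, by rw [hrefl_add, ha', hb']⟩
  zero_mem' := ⟨zero_mem _, by funext i j; simp [hrefl]⟩
  smul_mem' := by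
    rintro c a ⟨ha, ha'⟩
    exact ⟨Submodule.smul_mem _ c ha, by rw [hrefl_smul, ha']⟩

/-- The subspace of dihedrally symmetric Steinhaus triangles (fixed by `r` and `h`). -/
def DST (n : ℕ) : Submodule (ZMod 2) (ℕ → ℕ → ZMod 2) where
  carrier := {a | a ∈ ST n ∧ rot n a = a ∧ hrefl n a = a}
  add_mem' := by
    rintro a b ⟨ha, ha', ha''⟩ ⟨hb, hb', hb''⟩
    exact ⟨add_mem ha hb, by rw [rot_add, ha', hb'], by rw [hrefl_add, ha'', hb'']⟩
  zero_mem' := ⟨zero_mem _, by funext i j; simp [rot], by funext i j; simp [hrefl]⟩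
  smul_mem' := by
    rintro c a ⟨ha, ha', ha''⟩
    exact ⟨Submodule.smul_mem _ c ha, by rw [rot_smul, ha'],
      by rw [hrefl_smul, ha'']⟩

/-- `σ₂`: the sum of the first `n` terms of a sequence over `ZMod 2`. -/
def seqSum (n : ℕ) (S : ℕ → ZMod 2) : ZMod 2 := ∑ j ∈ Finset.Icc 1 n, S j

/-- The subspace `DST₀(n)` of dihedrally symmetric Steinhaus triangles whose
first row has zero sum. -/
def DST0 (n : ℕ) : Submodule (ZMod 2) (ℕ → ℕ → ZMod 2) where
  carrier := {a | a ∈ DST n ∧ seqSum n (a 1) = 0}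
  add_mem' := by
    rintro a b ⟨ha, ha'⟩ ⟨hb, hb'⟩
    refine ⟨add_mem ha hb, ?_⟩
    have h : seqSum n ((a + b) 1) = seqSum n (a 1) + seqSum n (b 1) := by
      simp [seqSum, Finset.sum_add_distrib]
    rw [h, ha', hb', add_zero]
  zero_mem' := ⟨zero_mem _, by simp [seqSum]⟩
  smul_mem' := by
    rintro c a ⟨ha, ha'⟩
    refine ⟨Submodule.smul_mem _ c ha, ?_⟩
    have h : seqSum n ((c • a) 1) = c • seqSum n (a 1) := by
      simp [seqSum, smul_eq_mul, Finset.mul_sum]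
    rw [h, ha', smul_zero]

/-- The derived sequence `∂S`. -/
def der (S : ℕ → ZMod 2) : ℕ → ZMod 2 := fun j => S j + S (j + 1)

/-- The antiderived sequence `∫_{i,x} S`, whose `j`-th term is
`x + Σ_{k=1}^{i-1} S k + Σ_{k=1}^{j-1} S k`. -/
def antider (i : ℕ) (x : ZMod 2) (S : ℕ → ZMod 2) : ℕ → ZMod 2 :=
  fun j => x + (∑ k ∈ Finset.Ico 1 i, S k) + (∑ k ∈ Finset.Ico 1 j, S k)

/-- A sequence of length `n` is symmetric. -/
def SymmSeq (n : ℕ) (S : ℕ → ZMod 2) : Prop :=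
  ∀ j, 1 ≤ j → j ≤ n → S (n - j + 1) = S j

/-- The binomial sequence `bs(k,l)` whose `j`-th term is `C(l+j-1, k) mod 2`. -/
def bseq (k l : ℤ) : ℕ → ZMod 2 := fun j => ((ibinom (l + (j : ℤ) - 1) k : ℤ) : ZMod 2)

/-- The map `H : ST(n) → ST(n-3)` removing the first row and the two sides. -/
def Hmap (n : ℕ) (a : ℕ → ℕ → ZMod 2) : ℕ → ℕ → ZMod 2 :=
  fun i j => if InTri (n - 3) i j then a (1 + i) (2 + j) else 0

/-- The projection `π_G` of a subspace `V` of triangles onto coordinates in `G`. -/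
def proj (V : Submodule (ZMod 2) (ℕ → ℕ → ZMod 2)) (G : Set (ℕ × ℕ)) :
    V →ₗ[ZMod 2] (G → ZMod 2) where
  toFun a := fun p => (a : ℕ → ℕ → ZMod 2) p.1.1 p.1.2
  map_add' := fun _ _ => rfl
  map_smul' := fun _ _ => rfl

/-- `G` is a generating index set of the subspace `V` of `ST(n)`:
`G` consists of triangle indices and `π_G : V → (ZMod 2)^G` is an isomorphism. -/
def IsGenIndexSet (n : ℕ) (V : Submodule (ZMod 2) (ℕ → ℕ → ZMod 2))
    (G : Set (ℕ × ℕ)) : Prop :=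
  (∀ p ∈ G, InTri n p.1 p.2) ∧ Function.Bijective (proj V G)

end Steinhaus
namespace Steinhaus

lemma char2 (x : ZMod 2) : x + x = 0 := by
  have h2 : (2 : ZMod 2) = 0 := rfl
  calc x + x = 2 * x := by ring
  _ = 0 := by rw [h2, zero_mul]

lemma ibinom_neg {a b : ℤ} (hb : b < 0) : ibinom a b = 0 := by simp [ibinom, hb]

lemma ibinom_of_nonneg {a b : ℤ} (ha : 0 ≤ a) (hb : 0 ≤ b) :
    ibinom a b = (a.toNat.choose b.toNat : ℤ) := by
  unfold ibinom; rw [if_neg (by omega), if_pos ha]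

lemma ibinom_of_neg {a b : ℤ} (ha : a < 0) (hb : 0 ≤ b) :
    ibinom a b = (-1) ^ b.toNat * ((b - a - 1).toNat.choose b.toNat : ℤ) := by
  unfold ibinom; rw [if_neg (by omega), if_neg (by omega)]

lemma ibinom_zero (a : ℤ) : ibinom a 0 = 1 := by
  rcases le_or_gt 0 a with ha | ha
  · rw [ibinom_of_nonneg ha le_rfl]; simp
  · rw [ibinom_of_neg ha le_rfl]; simp

lemma ibinom_pascal (a b : ℤ) : ibinom a b = ibinom (a-1) (b-1) + ibinom (a-1) b := by
  rcases lt_trichotomy b 0 with hb | hb | hb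
  · rw [ibinom_neg hb, ibinom_neg (by omega), ibinom_neg hb]; ring
  · subst hb
    rw [ibinom_zero, ibinom_neg (by omega : (0:ℤ)-1 < 0), ibinom_zero]; ring
  · rcases lt_trichotomy a 0 with ha | ha | ha
    · rw [ibinom_of_neg ha (by omega), ibinom_of_neg (by omega) (by omega),
        ibinom_of_neg (by omega) (by omega)]
      rw [show b - 1 - (a-1) - 1 = b - a - 1 by ring]
      have h2 : b.toNat = (b-1).toNat + 1 := by omega
      have h3 : (b - (a-1) - 1).toNat = (b - a - 1).toNat + 1 := by omega
      rw [h2, h3, Nat.choose_succ_succ]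
      push_cast
      ring
    · subst ha
      rw [ibinom_of_nonneg le_rfl (by omega), ibinom_of_neg (by omega) (by omega),
        ibinom_of_neg (by omega) (by omega)]
      rw [show (0:ℤ).toNat = 0 from rfl,
        Nat.choose_eq_zero_of_lt (by omega : 0 < b.toNat)]
      rw [show b - 1 - (0-1) - 1 = b - 1 by ring, show b - (0-1) - 1 = b by ring]
      have h2 : b.toNat = (b-1).toNat + 1 := by omega
      rw [h2, Nat.choose_self, Nat.choose_self]
      push_cast
      ring
    · rw [ibinom_of_nonneg (by omega) (by omega), ibinom_of_nonneg (by omega) (by omega),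
        ibinom_of_nonneg (by omega) (by omega)]
      have h1 : a.toNat = (a-1).toNat + 1 := by omega
      have h2 : b.toNat = (b-1).toNat + 1 := by omega
      rw [h1, h2, Nat.choose_succ_succ]
      push_cast
      ring

lemma ibinom_eq_zero_of_lt {a b : ℤ} (ha : 0 ≤ a) (h : a < b) : ibinom a b = 0 := by
  rw [ibinom_of_nonneg ha (by omega)]
  rw [Nat.choose_eq_zero_of_lt (by omega : a.toNat < b.toNat)]
  simp

/-- mod 2 reflection: C(a,k) ≡ C(k-1-a,k) mod 2, for k ≥ 0. -/
lemma ibinom_reflect (a k : ℤ) (hk : 0 ≤ k) :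
    ((ibinom a k : ℤ) : ZMod 2) = ((ibinom (k - 1 - a) k : ℤ) : ZMod 2) := by
  have hneg1 : ((-1 : ℤ) : ZMod 2) = 1 := by decide
  rcases lt_trichotomy a 0 with ha | ha | ha
  · rw [ibinom_of_neg ha hk, ibinom_of_nonneg (by omega) hk,
      show (k - a - 1).toNat = (k - 1 - a).toNat by omega]
    push_cast [hneg1]
    rw [one_pow, one_mul]
  · subst ha
    rw [show k - 1 - 0 = k - 1 by ring]
    rcases eq_or_lt_of_le hk with hk0 | hk0
    · rw [← hk0, ibinom_zero, ibinom_zero]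
    · rw [ibinom_eq_zero_of_lt le_rfl hk0, ibinom_eq_zero_of_lt (by omega) (by omega)]
  · rcases lt_or_ge a k with hak | hak
    · rw [ibinom_eq_zero_of_lt (by omega) hak, ibinom_eq_zero_of_lt (by omega) (by omega)]
    · rw [ibinom_of_nonneg (by omega) hk, ibinom_of_neg (by omega) hk,
        show k - (k - 1 - a) - 1 = a by ring]
      push_cast [hneg1]
      rw [one_pow, one_mul]

lemma der_bseq (k l : ℤ) : der (bseq k l) = bseq (k-1) l := by
  funext j
  have hp := ibinom_pascal (l + j) k
  have hc : ((ibinom (l + j) k : ℤ) : ZMod 2)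
      = ((ibinom (l + j - 1) (k-1) : ℤ) : ZMod 2) + ((ibinom (l + j - 1) k : ℤ) : ZMod 2) := by
    rw [hp]; push_cast; ring
  show bseq k l j + bseq k l (j+1) = bseq (k-1) l j
  unfold bseq
  have e1 : l + ((j : ℕ) + 1 : ℕ) - 1 = l + j := by push_cast; ring
  rw [e1, hc]
  rw [add_comm (((ibinom (l + ↑j - 1) (k - 1) : ℤ) : ZMod 2)) _, ← add_assoc, char2, zero_add]

lemma der_iter_bseq (k l : ℤ) (t : ℕ) : der^[t] (bseq k l) = bseq (k - t) l := by
  induction t with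
  | zero => simp
  | succ t ih =>
    rw [Function.iterate_succ_apply', ih, der_bseq]
    congr 1
    push_cast
    ring

/-- The triangle with first row `S`. -/
def nab (n : ℕ) (S : ℕ → ZMod 2) : ℕ → ℕ → ZMod 2 :=
  fun i j => if InTri n i j then (der^[i-1] S) (j - i + 1) else 0

lemma nab_mem_ST (n : ℕ) (S : ℕ → ZMod 2) : nab n S ∈ ST n := by
  constructor
  · intro i j h; simp [nab, h]
  · intro i j h2 hij hjn
    have hij1 : InTri n i j := ⟨by omega, hij, hjn⟩
    have h1 : InTri n (i-1) (j-1) := ⟨by omega, by omega, by omega⟩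
    have h2' : InTri n (i-1) j := ⟨by omega, by omega, hjn⟩
    unfold nab
    rw [if_pos hij1, if_pos h1, if_pos h2']
    have key : ∀ t mm, der^[t+1] S mm = der^[t] S mm + der^[t] S (mm+1) := by
      intro t mm; rw [Function.iterate_succ_apply']; rfl
    rw [show i - 1 - 1 = i - 2 by omega, show j - 1 - (i-1) + 1 = j - i + 1 by omega,
      show j - (i-1) + 1 = (j - i + 1) + 1 by omega, show i - 1 = (i-2)+1 by omega]
    exact key _ _

lemma nab_firstRow (n : ℕ) (S : ℕ → ZMod 2) : FirstRow n (nab n S) S := by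
  intro j hj1 hjn
  have h : InTri n 1 j := ⟨le_rfl, hj1, hjn⟩
  unfold nab
  rw [if_pos h]
  rw [show (1:ℕ) - 1 = 0 from rfl, Function.iterate_zero_apply,
    show j - 1 + 1 = j by omega]

lemma ST_ext {n : ℕ} {a b : ℕ → ℕ → ZMod 2} (ha : a ∈ ST n) (hb : b ∈ ST n)
    (h : ∀ j, 1 ≤ j → j ≤ n → a 1 j = b 1 j) : a = b := by
  have key : ∀ i j, a i j = b i j := by
    intro i
    induction i with
    | zero => intro j; rw [ha.1 0 j (by simp [InTri]), hb.1 0 j (by simp [InTri])]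
    | succ i ih =>
      intro j
      by_cases hij : InTri n (i+1) j
      · rcases Nat.eq_zero_or_pos i with hi0 | hi0
        · subst hi0; exact h j hij.2.1 hij.2.2
        · rw [ha.2 (i+1) j (by omega) hij.2.1 hij.2.2,
            hb.2 (i+1) j (by omega) hij.2.1 hij.2.2,
            show i + 1 - 1 = i by omega, ih (j-1), ih j]
      · rw [ha.1 _ _ hij, hb.1 _ _ hij]
  funext i j; exact key i j

lemma eq_nab {n : ℕ} {a : ℕ → ℕ → ZMod 2} {S : ℕ → ZMod 2} (ha : a ∈ ST n)
    (hrow : FirstRow n a S) : a = nab n S :=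
  ST_ext ha (nab_mem_ST n S) (fun j h1 h2 => by
    rw [hrow j h1 h2, nab_firstRow n S j h1 h2])

lemma nab_entry (n : ℕ) (k l : ℤ) (i j : ℕ) (hi : 1 ≤ i) (hij : i ≤ j) (hjn : j ≤ n) :
    nab n (bseq k l) i j = ((ibinom (l + j - i) (k + 1 - i) : ℤ) : ZMod 2) := by
  have h : InTri n i j := ⟨hi, hij, hjn⟩
  unfold nab
  rw [if_pos h, der_iter_bseq]
  unfold bseq
  congr 2
  · push_cast [show ((j - i + 1 : ℕ) : ℤ) = (j:ℤ) - i + 1 by omega]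
    ring
  · push_cast [show ((i - 1 : ℕ) : ℤ) = (i:ℤ) - 1 by omega]
    ring

end Steinhaus

namespace Steinhaus

lemma rot_entry {n i j : ℕ} (a : ℕ → ℕ → ZMod 2) (h : InTri n i j) :
    rot n a i j = a (j - i + 1) (n - i + 1) := if_pos h

lemma rot_vanish {n i j : ℕ} (a : ℕ → ℕ → ZMod 2) (h : ¬ InTri n i j) :
    rot n a i j = 0 := if_neg h

lemma hrefl_entry {n i j : ℕ} (a : ℕ → ℕ → ZMod 2) (h : InTri n i j) :
    hrefl n a i j = a i (n - j + i) := if_pos h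

lemma hrefl_vanish {n i j : ℕ} (a : ℕ → ℕ → ZMod 2) (h : ¬ InTri n i j) :
    hrefl n a i j = 0 := if_neg h

lemma rot_mem_ST {n : ℕ} {a : ℕ → ℕ → ZMod 2} (ha : a ∈ ST n) : rot n a ∈ ST n := by
  constructor
  · intro i j h; exact rot_vanish a h
  · intro i j h2 hij hjn
    have hij1 : InTri n i j := ⟨by omega, hij, hjn⟩
    have h1 : InTri n (i-1) (j-1) := ⟨by omega, by omega, by omega⟩
    have h2' : InTri n (i-1) j := ⟨by omega, by omega, hjn⟩
    rw [rot_entry a hij1, rot_entry a h1, rot_entry a h2']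
    rw [show j - 1 - (i-1) + 1 = j - i + 1 by omega, show n - (i-1) + 1 = n - i + 2 by omega,
      show j - (i-1) + 1 = j - i + 2 by omega]
    rw [ha.2 (j - i + 2) (n - i + 2) (by omega) (by omega) (by omega)]
    rw [show j - i + 2 - 1 = j - i + 1 by omega, show n - i + 2 - 1 = n - i + 1 by omega]
    rw [add_comm (a (j-i+1) (n-i+1)) (a (j-i+1) (n-i+2)), ← add_assoc, char2, zero_add]

lemma hrefl_mem_ST {n : ℕ} {a : ℕ → ℕ → ZMod 2} (ha : a ∈ ST n) : hrefl n a ∈ ST n := by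
  constructor
  · intro i j h; exact hrefl_vanish a h
  · intro i j h2 hij hjn
    have hij1 : InTri n i j := ⟨by omega, hij, hjn⟩
    have h1 : InTri n (i-1) (j-1) := ⟨by omega, by omega, by omega⟩
    have h2' : InTri n (i-1) j := ⟨by omega, by omega, hjn⟩
    rw [hrefl_entry a hij1, hrefl_entry a h1, hrefl_entry a h2']
    rw [show n - (j-1) + (i-1) = n - j + i by omega,
      show n - j + (i - 1) = n - j + i - 1 by omega]
    rw [ha.2 i (n - j + i) (by omega) (by omega) (by omega)]
    rw [show n - j + i - 1 = n - j + i - 1 by rfl]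
    ring

lemma rot_rot_rot {n : ℕ} {a : ℕ → ℕ → ZMod 2} (hV : ∀ i j, ¬ InTri n i j → a i j = 0) :
    rot n (rot n (rot n a)) = a := by
  funext i j
  by_cases h : InTri n i j
  · obtain ⟨h1, h2, h3⟩ := h
    have g1 : InTri n i j := ⟨h1, h2, h3⟩
    have g2 : InTri n (j - i + 1) (n - i + 1) := ⟨by omega, by omega, by omega⟩
    rw [rot_entry _ g1, rot_entry _ g2]
    rw [show n - i + 1 - (j - i + 1) + 1 = n - j + 1 by omega,
      show n - (j - i + 1) + 1 = n - j + i by omega]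
    have g3 : InTri n (n - j + 1) (n - j + i) := ⟨by omega, by omega, by omega⟩
    rw [rot_entry _ g3]
    rw [show n - j + i - (n - j + 1) + 1 = i by omega,
      show n - (n - j + 1) + 1 = j by omega]
  · rw [rot_vanish _ h, hV i j h]

lemma hrefl_hrefl {n : ℕ} {a : ℕ → ℕ → ZMod 2} (hV : ∀ i j, ¬ InTri n i j → a i j = 0) :
    hrefl n (hrefl n a) = a := by
  funext i j
  by_cases h : InTri n i j
  · obtain ⟨h1, h2, h3⟩ := h
    have g1 : InTri n i j := ⟨h1, h2, h3⟩
    have g2 : InTri n i (n - j + i) := ⟨by omega, by omega, by omega⟩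
    rw [hrefl_entry _ g1, hrefl_entry _ g2, show n - (n - j + i) + i = j by omega]
  · rw [hrefl_vanish _ h, hV i j h]

lemma hrefl_rot {n : ℕ} {a : ℕ → ℕ → ZMod 2} (hV : ∀ i j, ¬ InTri n i j → a i j = 0) :
    hrefl n (rot n a) = rot n (rot n (hrefl n a)) := by
  funext i j
  by_cases h : InTri n i j
  · obtain ⟨h1, h2, h3⟩ := h
    have g1 : InTri n i j := ⟨h1, h2, h3⟩
    have g2 : InTri n i (n - j + i) := ⟨by omega, by omega, by omega⟩
    rw [hrefl_entry _ g1, rot_entry _ g2,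
      show n - j + i - i + 1 = n - j + 1 by omega]
    have g3 : InTri n (j - i + 1) (n - i + 1) := ⟨by omega, by omega, by omega⟩
    rw [rot_entry _ g1, rot_entry _ g3,
      show n - i + 1 - (j - i + 1) + 1 = n - j + 1 by omega,
      show n - (j - i + 1) + 1 = n - j + i by omega]
    have g4 : InTri n (n - j + 1) (n - j + i) := ⟨by omega, by omega, by omega⟩
    rw [hrefl_entry _ g4, show n - (n - j + i) + (n - j + 1) = n - i + 1 by omega]
  · rw [hrefl_vanish _ h, rot_vanish _ h]

lemma rho_add (n : ℕ) (a b : ℕ → ℕ → ZMod 2) : rho n (a + b) = rho n a + rho n b := by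
  unfold rho
  rw [rot_add, rot_add]
  funext i j
  simp only [Pi.add_apply]
  ring

lemma rho_smul (n : ℕ) (c : ZMod 2) (a : ℕ → ℕ → ZMod 2) :
    rho n (c • a) = c • rho n a := by
  unfold rho
  rw [rot_smul, rot_smul]
  funext i j
  simp only [Pi.add_apply, Pi.smul_apply, smul_eq_mul]
  ring

lemma rho_mem_ST {n : ℕ} {a : ℕ → ℕ → ZMod 2} (ha : a ∈ ST n) : rho n a ∈ ST n := by
  unfold rho
  exact add_mem (add_mem (rot_mem_ST (rot_mem_ST ha)) (rot_mem_ST ha)) ha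

lemma rot_rho {n : ℕ} {a : ℕ → ℕ → ZMod 2} (hV : ∀ i j, ¬ InTri n i j → a i j = 0) :
    rot n (rho n a) = rho n a := by
  unfold rho
  rw [rot_add, rot_add, rot_rot_rot hV]
  funext i j
  simp only [Pi.add_apply]
  ring

lemma hrefl_rho {n : ℕ} {a : ℕ → ℕ → ZMod 2} (hV : ∀ i j, ¬ InTri n i j → a i j = 0)
    (hs : hrefl n a = a) : hrefl n (rho n a) = rho n a := by
  have hVr : ∀ i j, ¬ InTri n i j → rot n a i j = 0 := fun i j h => rot_vanish a h
  have hVh : ∀ i j, ¬ InTri n i j → hrefl n a i j = 0 := fun i j h => hrefl_vanish a h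
  have hVrh : ∀ i j, ¬ InTri n i j → rot n (hrefl n a) i j = 0 :=
    fun i j h => rot_vanish _ h
  unfold rho
  rw [hrefl_add, hrefl_add]
  rw [hrefl_rot hVr, hrefl_rot hV, hs, rot_rot_rot hVr]
  funext i j
  simp only [Pi.add_apply]
  ring

lemma rho_mem_DST {n : ℕ} {a : ℕ → ℕ → ZMod 2} (ha : a ∈ ST n)
    (hs : hrefl n a = a) : rho n a ∈ DST n :=
  ⟨rho_mem_ST ha, rot_rho ha.1, hrefl_rho ha.1 hs⟩

end Steinhaus

namespace Steinhaus

/-- `ρ(∇(bs_n(k,(k-n)/2)))`. -/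
def Wk (n : ℕ) (k : ℤ) : ℕ → ℕ → ZMod 2 := rho n (nab n (bseq k ((k - n)/2)))

/-- `U_n = ρ(∇((1)_n))`. -/
def Un (n : ℕ) : ℕ → ℕ → ZMod 2 := rho n (nab n (fun _ => 1))

lemma bseq_zero (l : ℤ) : bseq 0 l = fun _ => 1 := by
  funext j; unfold bseq; rw [ibinom_zero]; norm_num

lemma Wk_zero (n : ℕ) : Wk n 0 = Un n := by unfold Wk Un; rw [bseq_zero]

lemma bseq_symm (n : ℕ) (k : ℤ) (hk : 0 ≤ k) (hpar : (2:ℤ) ∣ k - n) :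
    SymmSeq n (bseq k ((k - n)/2)) := by
  intro j hj1 hjn
  unfold bseq
  rw [show ((n - j + 1 : ℕ) : ℤ) = (n:ℤ) - j + 1 by omega]
  rw [show (k - (n:ℤ))/2 + ((n:ℤ) - j + 1) - 1 = k - 1 - ((k - n)/2 + j - 1) by omega]
  exact (ibinom_reflect _ k hk).symm

lemma symm_const1 (n : ℕ) : SymmSeq n (fun _ => (1 : ZMod 2)) := fun _ _ _ => rfl

lemma hrefl_nab {n : ℕ} {S : ℕ → ZMod 2} (hs : SymmSeq n S) :
    hrefl n (nab n S) = nab n S := by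
  refine ST_ext (hrefl_mem_ST (nab_mem_ST n S)) (nab_mem_ST n S) (fun j h1 h2 => ?_)
  have g : InTri n 1 j := ⟨le_rfl, h1, h2⟩
  rw [hrefl_entry _ g, nab_firstRow n S j h1 h2,
    nab_firstRow n S (n - j + 1) (by omega) (by omega), hs j h1 h2]

lemma Wk_mem_DST (n : ℕ) (k : ℤ) (hk : 0 ≤ k) (hpar : (2:ℤ) ∣ k - n) :
    Wk n k ∈ DST n :=
  rho_mem_DST (nab_mem_ST _ _) (hrefl_nab (bseq_symm n k hk hpar))

lemma Un_mem_DST (n : ℕ) : Un n ∈ DST n :=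
  rho_mem_DST (nab_mem_ST _ _) (hrefl_nab (symm_const1 n))

lemma Wk_entry (n : ℕ) (k : ℤ) (hpar : (2:ℤ) ∣ k - n) (i j : ℕ)
    (hi : 1 ≤ i) (hij : i ≤ j) (hjn : j ≤ n) :
    Wk n k i j = ((ibinom ((k - n)/2 + j - i) (k + 1 - i)
      + ibinom ((k + n)/2 - j) (k + i - j)
      + ibinom ((k - n)/2 + i - 1) (k + j - n) : ℤ) : ZMod 2) := by
  have g1 : InTri n i j := ⟨hi, hij, hjn⟩
  have g2 : InTri n (j - i + 1) (n - i + 1) := ⟨by omega, by omega, by omega⟩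
  set nb := nab n (bseq k ((k - n)/2)) with hnb
  have t1 : nb i j = ((ibinom ((k - n)/2 + j - i) (k + 1 - i) : ℤ) : ZMod 2) :=
    nab_entry n k _ i j hi hij hjn
  have t2 : rot n nb i j = ((ibinom ((k + n)/2 - j) (k + i - j) : ℤ) : ZMod 2) := by
    rw [rot_entry _ g1, hnb, nab_entry n k _ _ _ (by omega) (by omega) (by omega)]
    rw [show (k - ↑n)/2 + ↑(n - i + 1) - ↑(j - i + 1) = (k + ↑n)/2 - ↑j by omega,
      show k + 1 - (↑(j - i + 1) : ℤ) = k + ↑i - ↑j by omega]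
  have t3 : rot n (rot n nb) i j
      = ((ibinom ((k - n)/2 + i - 1) (k + j - n) : ℤ) : ZMod 2) := by
    rw [rot_entry _ g1, rot_entry _ g2]
    rw [show n - i + 1 - (j - i + 1) + 1 = n - j + 1 by omega,
      show n - (j - i + 1) + 1 = n - j + i by omega, hnb,
      nab_entry n k _ _ _ (by omega) (by omega) (by omega)]
    rw [show (k - ↑n)/2 + ↑(n - j + i) - ↑(n - j + 1) = (k - ↑n)/2 + ↑i - 1 by omega,
      show k + 1 - (↑(n - j + 1) : ℤ) = k + ↑j - ↑n by omega]
  show (rot n (rot n nb) + rot n nb + nb) i j = _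
  simp only [Pi.add_apply]
  rw [t1, t2, t3]
  push_cast
  ring

lemma der_iter_const1 (t : ℕ) :
    der^[t] (fun _ => (1 : ZMod 2)) = if t = 0 then (fun _ => 1) else (fun _ => 0) := by
  induction t with
  | zero => simp
  | succ t ih =>
    rw [Function.iterate_succ_apply', ih]
    by_cases ht : t = 0
    · subst ht
      simp only [if_pos rfl, if_neg (Nat.succ_ne_zero 0)]
      funext j; exact char2 1
    · rw [if_neg ht, if_neg (Nat.succ_ne_zero t)]
      funext j; show (0 : ZMod 2) + 0 = 0; rw [add_zero]

lemma nab_const1_entry {n i j : ℕ} (g : InTri n i j) :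
    nab n (fun _ => (1:ZMod 2)) i j = if i = 1 then 1 else 0 := by
  obtain ⟨hg1, hg2, hg3⟩ := g
  have g : InTri n i j := ⟨hg1, hg2, hg3⟩
  unfold nab
  rw [if_pos g, der_iter_const1]
  by_cases hi : i = 1
  · rw [if_pos (by omega : i - 1 = 0), if_pos hi]
  · rw [if_neg (by omega : ¬ (i - 1 = 0)), if_neg hi]

lemma Un_entry {n i j : ℕ} (g : InTri n i j) :
    Un n i j = (if i = 1 then 1 else 0) + (if i = j then 1 else 0)
      + (if j = n then 1 else 0) := by
  obtain ⟨h1, h2, h3⟩ := g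
  have g1 : InTri n i j := ⟨h1, h2, h3⟩
  have g2 : InTri n (j - i + 1) (n - i + 1) := ⟨by omega, by omega, by omega⟩
  have g3 : InTri n (n - j + 1) (n - j + i) := ⟨by omega, by omega, by omega⟩
  show (rot n (rot n (nab n fun _ => 1)) + rot n (nab n fun _ => 1)
      + nab n fun _ => 1) i j = _
  simp only [Pi.add_apply]
  rw [rot_entry (rot n (nab n fun _ => (1:ZMod 2))) g1,
    rot_entry (nab n fun _ => (1:ZMod 2)) g1,
    rot_entry (nab n fun _ => (1:ZMod 2)) g2,
    show n - i + 1 - (j - i + 1) + 1 = n - j + 1 by omega,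
    show n - (j - i + 1) + 1 = n - j + i by omega,
    nab_const1_entry g1, nab_const1_entry g2, nab_const1_entry g3]
  simp only [show (j - i + 1 = 1) ↔ (i = j) from by omega,
    show (n - j + 1 = 1) ↔ (j = n) from by omega]
  ring

lemma Un_ne_zero {n : ℕ} (hn : 3 ≤ n) : Un n ≠ 0 := by
  have g : InTri n 1 2 := ⟨le_rfl, by omega, by omega⟩
  have val : Un n 1 2 = 1 := by
    rw [Un_entry g, if_neg (show ¬ (2 = n) by omega),
      if_neg (show ¬ ((1:ℕ) = 2) by omega), if_pos (show (1:ℕ) = 1 from rfl)]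
    ring
  intro h
  rw [h] at val
  simp at val

lemma Un_one_ne_zero : Un 1 ≠ 0 := by
  have g : InTri 1 1 1 := ⟨le_rfl, le_rfl, le_rfl⟩
  have val : Un 1 1 1 = 1 := by
    rw [Un_entry g]
    decide
  intro h
  rw [h] at val
  simp at val

end Steinhaus

namespace Steinhaus

lemma Hmap_entry {n i j : ℕ} (a : ℕ → ℕ → ZMod 2) (h : InTri (n-3) i j) :
    Hmap n a i j = a (1+i) (2+j) := if_pos h

lemma Hmap_vanish {n i j : ℕ} (a : ℕ → ℕ → ZMod 2) (h : ¬ InTri (n-3) i j) :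
    Hmap n a i j = 0 := if_neg h

lemma Hmap_add (n : ℕ) (a b : ℕ → ℕ → ZMod 2) :
    Hmap n (a + b) = Hmap n a + Hmap n b := by
  funext i j; simp only [Hmap, Pi.add_apply]; split_ifs <;> simp

lemma Hmap_smul (n : ℕ) (c : ZMod 2) (a : ℕ → ℕ → ZMod 2) :
    Hmap n (c • a) = c • Hmap n a := by
  funext i j; simp only [Hmap, Pi.smul_apply]; split_ifs <;> simp

lemma rot_fix_entry {n : ℕ} {a : ℕ → ℕ → ZMod 2} (hr : rot n a = a) {i j : ℕ}
    (g : InTri n i j) : a i j = a (j - i + 1) (n - i + 1) := by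
  conv_lhs => rw [← hr]
  rw [rot_entry a g]

lemma hrefl_fix_entry {n : ℕ} {a : ℕ → ℕ → ZMod 2} (hr : hrefl n a = a) {i j : ℕ}
    (g : InTri n i j) : a i j = a i (n - j + i) := by
  conv_lhs => rw [← hr]
  rw [hrefl_entry a g]

lemma Hmap_mem_ST {n : ℕ} {a : ℕ → ℕ → ZMod 2} (ha : a ∈ ST n) :
    Hmap n a ∈ ST (n-3) := by
  constructor
  · intro i j h; exact Hmap_vanish a h
  · intro i j h2 hij hjn
    have g : InTri (n-3) i j := ⟨by omega, hij, hjn⟩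
    have g1 : InTri (n-3) (i-1) (j-1) := ⟨by omega, by omega, by omega⟩
    have g2 : InTri (n-3) (i-1) j := ⟨by omega, by omega, hjn⟩
    have hn : 4 ≤ n := by omega
    rw [Hmap_entry a g, Hmap_entry a g1, Hmap_entry a g2]
    rw [ha.2 (1+i) (2+j) (by omega) (by omega) (by omega)]
    rw [show 1 + i - 1 = 1 + (i-1) by omega, show 2 + j - 1 = 2 + (j-1) by omega]

lemma Hmap_mem_DST {n : ℕ} {a : ℕ → ℕ → ZMod 2} (ha : a ∈ DST n) :
    Hmap n a ∈ DST (n-3) := by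
  obtain ⟨hst, hrot, hsym⟩ := ha
  refine ⟨Hmap_mem_ST hst, ?_, ?_⟩
  · funext i j
    by_cases g : InTri (n-3) i j
    · obtain ⟨b1, b2, b3⟩ := g
      have g : InTri (n-3) i j := ⟨b1, b2, b3⟩
      have hn : 4 ≤ n := by omega
      have g' : InTri (n-3) (j - i + 1) (n - 3 - i + 1) := ⟨by omega, by omega, by omega⟩
      have gN : InTri n (1+i) (2+j) := ⟨by omega, by omega, by omega⟩
      rw [rot_entry _ g, Hmap_entry a g', Hmap_entry a g]
      rw [rot_fix_entry hrot gN]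
      rw [show 2 + j - (1 + i) + 1 = 1 + (j - i + 1) by omega,
        show n - (1 + i) + 1 = 2 + (n - 3 - i + 1) by omega]
    · rw [rot_vanish _ g, Hmap_vanish _ g]
  · funext i j
    by_cases g : InTri (n-3) i j
    · obtain ⟨b1, b2, b3⟩ := g
      have g : InTri (n-3) i j := ⟨b1, b2, b3⟩
      have hn : 4 ≤ n := by omega
      have g' : InTri (n-3) i (n - 3 - j + i) := ⟨b1, by omega, by omega⟩
      have gN : InTri n (1+i) (2+j) := ⟨by omega, by omega, by omega⟩
      rw [hrefl_entry _ g, Hmap_entry a g', Hmap_entry a g]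
      rw [hrefl_fix_entry hsym gN]
      rw [show n - (2 + j) + (1 + i) = 2 + (n - 3 - j + i) by omega]
    · rw [hrefl_vanish _ g, Hmap_vanish _ g]

lemma Wk_vanish {n : ℕ} (k : ℤ) {i j : ℕ} (h : ¬ InTri n i j) : Wk n k i j = 0 :=
  (rho_mem_ST (nab_mem_ST _ _)).1 i j h

lemma Hmap_Wk {n : ℕ} (hn : 3 ≤ n) (k : ℤ) (hk : 1 ≤ k) (hpar : (2:ℤ) ∣ k - n) :
    Hmap n (Wk n k) = Wk (n-3) (k-1) := by
  funext i j
  by_cases g : InTri (n-3) i j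
  · obtain ⟨b1, b2, b3⟩ := g
    have g : InTri (n-3) i j := ⟨b1, b2, b3⟩
    have hn4 : 4 ≤ n := by omega
    rw [Hmap_entry _ g,
      Wk_entry n k hpar (1+i) (2+j) (by omega) (by omega) (by omega),
      Wk_entry (n-3) (k-1) (by omega) i j b1 b2 b3]
    rw [show ((k - (n:ℤ))/2 + ((2+j : ℕ) : ℤ) - ((1+i : ℕ) : ℤ))
          = ((k - 1 - ((n-3 : ℕ) : ℤ))/2 + (j:ℤ) - (i:ℤ)) from by omega,
      show (k + 1 - ((1+i : ℕ) : ℤ)) = (k - 1 + 1 - (i:ℤ)) from by omega,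
      show ((k + (n:ℤ))/2 - ((2+j : ℕ) : ℤ)) = ((k - 1 + ((n-3 : ℕ) : ℤ))/2 - (j:ℤ)) from by omega,
      show (k + ((1+i : ℕ) : ℤ) - ((2+j : ℕ) : ℤ)) = (k - 1 + (i:ℤ) - (j:ℤ)) from by omega,
      show ((k - (n:ℤ))/2 + ((1+i : ℕ) : ℤ) - 1) = ((k - 1 - ((n-3 : ℕ) : ℤ))/2 + (i:ℤ) - 1) from by omega,
      show (k + ((2+j : ℕ) : ℤ) - (n:ℤ)) = (k - 1 + (j:ℤ) - ((n-3 : ℕ) : ℤ)) from by omega]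
  · rw [Hmap_vanish _ g, Wk_vanish (k-1) g]

lemma Hmap_Un (n : ℕ) : Hmap n (Un n) = 0 := by
  funext i j
  by_cases g : InTri (n-3) i j
  · obtain ⟨b1, b2, b3⟩ := g
    have g : InTri (n-3) i j := ⟨b1, b2, b3⟩
    have hn4 : 4 ≤ n := by omega
    have gN : InTri n (1+i) (2+j) := ⟨by omega, by omega, by omega⟩
    rw [Hmap_entry _ g, Un_entry gN,
      if_neg (show ¬ (1 + i = 1) by omega), if_neg (show ¬ (1 + i = 2 + j) by omega),
      if_neg (show ¬ (2 + j = n) by omega)]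
    simp
  · rw [Hmap_vanish _ g]; simp

end Steinhaus

namespace Steinhaus

lemma eq_of_add_eq_zero2 {x y : ZMod 2} (h : x + y = 0) : y = x := by
  calc y = x + (x + y) := by rw [← add_assoc, char2, zero_add]
  _ = x := by rw [h, add_zero]

lemma ker_Hmap {n : ℕ} (hn : 3 ≤ n) {a : ℕ → ℕ → ZMod 2} (ha : a ∈ DST n)
    (h0 : Hmap n a = 0) : a = a 1 2 • Un n := by
  obtain ⟨hst, hrot, hsym⟩ := ha
  have interior : ∀ i j, 2 ≤ i → i + 1 ≤ j → j ≤ n - 1 → a i j = 0 := by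
    intro i j h2 hij hj
    have g : InTri (n-3) (i-1) (j-2) := ⟨by omega, by omega, by omega⟩
    have key := congrFun (congrFun h0 (i-1)) (j-2)
    rw [Hmap_entry _ g, show 1 + (i-1) = i by omega, show 2 + (j-2) = j by omega] at key
    simpa using key
  have symm_row : ∀ j, 1 ≤ j → j ≤ n → a 1 j = a 1 (n - j + 1) := by
    intro j h1 h2
    exact hrefl_fix_entry hsym ⟨le_rfl, h1, h2⟩
  have row2 : ∀ j, 2 ≤ j → j ≤ n - 1 → a 1 j = a 1 2 := by
    intro j hj2
    induction j, hj2 using Nat.le_induction with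
    | base => intro _; rfl
    | succ j hj2' ih =>
      intro hj
      have hint : a 2 (j+1) = 0 := interior 2 (j+1) le_rfl (by omega) hj
      have hrule : a 2 (j+1) = a 1 j + a 1 (j+1) := by
        rw [hst.2 2 (j+1) le_rfl (by omega) (by omega)]
        rw [show (2:ℕ) - 1 = 1 from rfl, show j + 1 - 1 = j from rfl]
      rw [hrule] at hint
      rw [eq_of_add_eq_zero2 hint]
      exact ih (by omega)
  have r3 : a 1 (n-1) = a 1 2 := by
    have := symm_row 2 (by omega) (by omega)
    rw [show n - 2 + 1 = n - 1 by omega] at this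
    exact this.symm
  have h11 : a 1 1 = 0 := by
    have r1 : a 2 2 = a 1 1 + a 1 2 := by
      rw [hst.2 2 2 le_rfl le_rfl (by omega)]
    have r2 : a 2 2 = a 1 (n-1) := by
      have := rot_fix_entry hrot (⟨by omega, le_rfl, by omega⟩ : InTri n 2 2)
      rw [show (2:ℕ) - 2 + 1 = 1 from rfl, show n - 2 + 1 = n - 1 by omega] at this
      exact this
    have key : a 1 1 + a 1 2 = a 1 2 := by rw [← r1, r2, r3]
    calc a 1 1 = a 1 1 + (a 1 2 + a 1 2) := by rw [char2, add_zero]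
    _ = (a 1 1 + a 1 2) + a 1 2 := by rw [add_assoc]
    _ = a 1 2 + a 1 2 := by rw [key]
    _ = 0 := char2 _
  have h1n : a 1 n = 0 := by
    have := symm_row 1 le_rfl (by omega)
    rw [show n - 1 + 1 = n by omega] at this
    rw [← this, h11]
  refine ST_ext hst (Submodule.smul_mem _ _ (Un_mem_DST n).1) (fun j hj1 hjn => ?_)
  have gj : InTri n 1 j := ⟨le_rfl, hj1, hjn⟩
  rw [Pi.smul_apply, Pi.smul_apply, Un_entry gj, if_pos rfl, smul_eq_mul]
  rcases eq_or_ne j 1 with h | hne1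
  · subst h
    rw [h11, if_pos rfl, if_neg (show ¬ (1 = n) by omega)]
    rw [show (1 : ZMod 2) + 1 + 0 = 0 by decide, mul_zero]
  · rcases eq_or_ne j n with h | hnen
    · subst h
      rw [h1n, if_neg (show ¬ (1 = j) by omega), if_pos rfl]
      rw [show (1 : ZMod 2) + 0 + 1 = 0 by decide, mul_zero]
    · rw [row2 j (by omega) (by omega), if_neg (show ¬ (1 = j) by omega),
        if_neg hnen, add_zero, add_zero, mul_one]

lemma tele_sum (f : ℕ → ZMod 2) (m : ℕ) (hm : 1 ≤ m) :
    ∑ j ∈ Finset.Icc 1 m, (f j + f (j+1)) = f 1 + f (m+1) := by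
  induction m, hm using Nat.le_induction with
  | base => rw [Finset.Icc_self, Finset.sum_singleton]
  | succ m hm' ih =>
    rw [← Finset.insert_Icc_right_eq_Icc_add_one (show 1 ≤ m + 1 by omega),
      Finset.sum_insert (by simp), ih]
    linear_combination char2 (f (m+1))

lemma seqSum_Hmap {n : ℕ} (hn : 3 ≤ n) {a : ℕ → ℕ → ZMod 2} (ha : a ∈ DST n) :
    seqSum (n-3) (Hmap n a 1) = 0 := by
  obtain ⟨hst, hrot, hsym⟩ := ha
  rcases eq_or_lt_of_le hn with h3 | h4
  · rw [seqSum, show n - 3 = 0 by omega]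
    simp
  · have key : ∀ j ∈ Finset.Icc 1 (n-3),
        Hmap n a 1 j = a 1 (j+1) + a 1 (j+1+1) := by
      intro j hj
      rw [Finset.mem_Icc] at hj
      have g : InTri (n-3) 1 j := ⟨le_rfl, hj.1, hj.2⟩
      rw [Hmap_entry _ g, hst.2 (1+1) (2+j) le_rfl (by omega) (by omega)]
      rw [show 1 + 1 - 1 = 1 from rfl, show 2 + j - 1 = j + 1 by omega,
        show 2 + j = j + 1 + 1 by omega]
    rw [seqSum, Finset.sum_congr rfl key,
      tele_sum (fun j => a 1 (j+1)) (n-3) (by omega)]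
    have e1 : a 1 (n - 3 + 1 + 1) = a 1 2 := by
      have := hrefl_fix_entry hsym (⟨le_rfl, by omega, by omega⟩ : InTri n 1 2)
      rw [show n - 2 + 1 = n - 3 + 1 + 1 by omega] at this
      exact this.symm
    rw [e1, show (1:ℕ) + 1 = 2 from rfl, char2]

lemma seqSum_Un_odd {n : ℕ} (h1 : 1 ≤ n) (hodd : n % 2 = 1) :
    seqSum n (Un n 1) = 1 := by
  have key : ∀ j ∈ Finset.Icc 1 n, Un n 1 j
      = 1 + ((if 1 = j then 1 else 0) + if j = n then (1:ZMod 2) else 0) := by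
    intro j hj
    rw [Finset.mem_Icc] at hj
    rw [Un_entry (⟨le_rfl, hj.1, hj.2⟩ : InTri n 1 j), if_pos rfl]
    ring
  rw [seqSum, Finset.sum_congr rfl key, Finset.sum_add_distrib, Finset.sum_add_distrib]
  rw [Finset.sum_ite_eq (Finset.Icc 1 n) 1 (fun _ => (1:ZMod 2)),
    Finset.sum_ite_eq' (Finset.Icc 1 n) n (fun _ => (1:ZMod 2))]
  rw [if_pos (by rw [Finset.mem_Icc]; omega), if_pos (by rw [Finset.mem_Icc]; omega)]
  rw [Finset.sum_const, Nat.card_Icc, show n + 1 - 1 = n from rfl]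
  have hcast : ((n : ℕ) : ZMod 2) = 1 := by
    have := ZMod.natCast_mod n 2
    rw [hodd] at this
    rw [← this]
    rfl
  rw [nsmul_eq_mul, hcast, mul_one, char2, add_zero]

end Steinhaus

namespace Steinhaus

/-- The dimension `m(n) = ⌊(n+3)/6⌋ + δ_{1,(n mod 6)}`. -/
def md (n : ℕ) : ℕ := (n + 3) / 6 + if n % 6 = 1 then 1 else 0

lemma md_pos {n : ℕ} (hn : 3 ≤ n) : 1 ≤ md n := by unfold md; split_ifs <;> omega

lemma md_step_odd {n : ℕ} (hn : 3 ≤ n) (h : n % 2 = 1) : md n = md (n-3) + 1 := by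
  unfold md; split_ifs <;> omega

lemma md_step_even {n : ℕ} (hn : 3 ≤ n) (h : n % 2 = 0) : md n = md (n-3) := by
  unfold md; split_ifs <;> omega

/-- The basis family: `Un` at index 0, `Wk n (2i - n%2)` for `i ≥ 1`. -/
def famv (n : ℕ) (i : ℕ) : ℕ → ℕ → ZMod 2 :=
  if i = 0 then Un n else Wk n (2 * (i:ℤ) - ((n % 2 : ℕ) : ℤ))

lemma famv_zero (n : ℕ) : famv n 0 = Un n := by unfold famv; rw [if_pos rfl]

lemma famv_mem_DST (n i : ℕ) : famv n i ∈ DST n := by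
  unfold famv
  split_ifs with h
  · exact Un_mem_DST n
  · exact Wk_mem_DST n _ (by omega) (by omega)

/-- Bundled family. -/
def famvD (n : ℕ) (i : ℕ) : DST n := ⟨famv n i, famv_mem_DST n i⟩

/-- `H` as a linear map `DST n → DST (n-3)`. -/
def Hlin (n : ℕ) : DST n →ₗ[ZMod 2] DST (n-3) where
  toFun a := ⟨Hmap n a.val, Hmap_mem_DST a.2⟩
  map_add' a b := Subtype.ext (Hmap_add n a.val b.val)
  map_smul' c a := Subtype.ext (Hmap_smul n c a.val)

/-- Sum of the first row, as a linear form on `DST n`. -/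
def philin (n : ℕ) : DST n →ₗ[ZMod 2] ZMod 2 where
  toFun y := seqSum n ((y : ℕ → ℕ → ZMod 2) 1)
  map_add' y z := by
    show seqSum n (((y + z : DST n) : ℕ → ℕ → ZMod 2) 1) = _
    simp [seqSum, Finset.sum_add_distrib]
  map_smul' c y := by
    show seqSum n (((c • y : DST n) : ℕ → ℕ → ZMod 2) 1) = _
    simp [seqSum, Finset.mul_sum, smul_eq_mul]

lemma Hmap_famv0 (n : ℕ) : Hmap n (famv n 0) = 0 := by
  rw [famv_zero]; exact Hmap_Un n

lemma Hmap_famv_odd {n : ℕ} (hn : 3 ≤ n) (h : n % 2 = 1) (j : ℕ) :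
    Hmap n (famv n (j+1)) = famv (n-3) j := by
  unfold famv
  rw [if_neg (Nat.succ_ne_zero j)]
  rw [show (2 * (((j+1 : ℕ)):ℤ) - ((n % 2 : ℕ) : ℤ)) = 2*(j:ℤ)+1 from by omega]
  rw [Hmap_Wk hn (2*(j:ℤ)+1) (by omega) (by omega)]
  by_cases hj : j = 0
  · subst hj
    rw [if_pos rfl, show (2*((0:ℕ):ℤ)+1) - 1 = 0 from by norm_num]
    exact Wk_zero (n-3)
  · rw [if_neg hj,
      show (2*(j:ℤ)+1) - 1 = 2 * (j:ℤ) - (((n-3) % 2 : ℕ) : ℤ) from by omega]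

lemma Hmap_famv_even {n : ℕ} (hn : 3 ≤ n) (h : n % 2 = 0) (j : ℕ) (hj : 1 ≤ j) :
    Hmap n (famv n j) = famv (n-3) j := by
  unfold famv
  rw [if_neg (by omega), if_neg (by omega)]
  rw [show (2 * ((j:ℕ):ℤ) - ((n % 2 : ℕ) : ℤ)) = 2*(j:ℤ) from by omega]
  rw [Hmap_Wk hn (2*(j:ℤ)) (by omega) (by omega)]
  rw [show (2*(j:ℤ)) - 1 = 2 * (j:ℤ) - (((n-3) % 2 : ℕ) : ℤ) from by omega]

lemma DST_zero_triv : ∀ a ∈ DST 0, a = 0 := by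
  intro a ha
  funext i j
  refine ha.1.1 i j ?_
  rintro ⟨h1, h2, h3⟩
  omega

lemma DST_two_triv : ∀ a ∈ DST 2, a = 0 := by
  intro a ha
  obtain ⟨hst, hrot, hsym⟩ := ha
  have e1 : a 1 1 = a 1 2 := by
    have := hrefl_fix_entry hsym (⟨le_rfl, le_rfl, by omega⟩ : InTri 2 1 1)
    exact this
  have e2 : a 1 2 = a 2 2 := by
    have := rot_fix_entry hrot (⟨le_rfl, by omega, le_rfl⟩ : InTri 2 1 2)
    exact this
  have e3 : a 2 2 = a 1 1 + a 1 2 := by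
    rw [hst.2 2 2 le_rfl le_rfl le_rfl]
  have h12 : a 1 2 = 0 := by linear_combination e1 + e2 + e3 + char2 (a 1 2)
  have h11 : a 1 1 = 0 := by rw [e1, h12]
  refine ST_ext hst (Submodule.zero_mem (ST 2)) (fun j hj1 hj2 => ?_)
  interval_cases j
  · rw [h11]; rfl
  · rw [h12]; rfl

lemma DST_trivial_basis {n : ℕ} (h0 : md n = 0) (htriv : ∀ a ∈ DST n, a = 0) :
    ∃ b : Module.Basis (Fin (md n)) (ZMod 2) (DST n),
      ∀ i : Fin (md n), (b i : ℕ → ℕ → ZMod 2) = famv n i := by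
  haveI : Subsingleton (DST n) :=
    ⟨fun x y => Subtype.ext (by rw [htriv x x.2, htriv y y.2])⟩
  haveI : IsEmpty (Fin (md n)) := ⟨fun i => absurd i.isLt (by omega)⟩
  exact ⟨Module.Basis.empty _, fun i => isEmptyElim i⟩

lemma build {n M : ℕ} (hn : 3 ≤ n) (hMn : md n = M + 1)
    (g : Fin M → DST (n-3)) (hg : LinearIndependent (ZMod 2) g)
    (hgH : ∀ j : Fin M, Hlin n (famvD n (j.val+1)) = g j)
    (hspan : ∀ a : DST n, Hlin n a ∈ Submodule.span (ZMod 2) (Set.range g)) :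
    ∃ b : Module.Basis (Fin (md n)) (ZMod 2) (DST n),
      ∀ i : Fin (md n), (b i : ℕ → ℕ → ZMod 2) = famv n i := by
  have hUnne : famvD n 0 ≠ 0 := by
    intro h
    have h2 : famv n 0 = 0 := congrArg Subtype.val h
    rw [famv_zero] at h2
    exact Un_ne_zero hn h2
  have HK0 : Hlin n (famvD n 0) = 0 := Subtype.ext (Hmap_famv0 n)
  set v : Fin (M+1) → DST n := fun i => famvD n i.val with hv
  have hindep : LinearIndependent (ZMod 2) v := by
    rw [Fintype.linearIndependent_iff]
    intro c hc
    have himg : ∑ j : Fin M, c j.succ • g j = 0 := by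
      have h1 := congrArg (Hlin n) hc
      rw [map_sum, map_zero] at h1
      simp only [map_smul] at h1
      rw [Fin.sum_univ_succ] at h1
      rw [show Hlin n (v 0) = 0 from HK0, smul_zero, zero_add] at h1
      calc ∑ j : Fin M, c j.succ • g j
          = ∑ j : Fin M, c j.succ • Hlin n (v j.succ) := by
            refine Finset.sum_congr rfl (fun j _ => ?_)
            rw [show Hlin n (v j.succ) = g j from hgH j]
        _ = 0 := h1
    have hc1 : ∀ j : Fin M, c j.succ = 0 := Fintype.linearIndependent_iff.mp hg _ himg
    have hc0 : c 0 = 0 := by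
      rw [Fin.sum_univ_succ] at hc
      have hsum0 : (∑ j : Fin M, c j.succ • v j.succ) = 0 :=
        Finset.sum_eq_zero (fun j _ => by rw [hc1 j, zero_smul])
      rw [hsum0, add_zero] at hc
      rcases smul_eq_zero.mp hc with h | h
      · exact h
      · exact absurd h hUnne
    intro i
    exact Fin.cases hc0 (fun j => hc1 j) i
  have hsp : ⊤ ≤ Submodule.span (ZMod 2) (Set.range v) := by
    intro a _
    obtain ⟨d, hd⟩ := (Submodule.mem_span_range_iff_exists_fun (ZMod 2)).mp (hspan a)
    set x : DST n := ∑ j : Fin M, d j • famvD n (j.val + 1) with hx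
    have hHx : Hlin n x = Hlin n a := by
      rw [hx, map_sum]
      simp only [map_smul]
      calc ∑ j : Fin M, d j • Hlin n (famvD n (j.val + 1))
          = ∑ j : Fin M, d j • g j :=
            Finset.sum_congr rfl (fun j _ => by rw [hgH j])
        _ = Hlin n a := hd
    have hker : Hmap n ((a - x : DST n) : ℕ → ℕ → ZMod 2) = 0 := by
      have h2 : Hlin n (a - x) = 0 := by rw [map_sub, hHx, sub_self]
      exact congrArg Subtype.val h2
    have hax := ker_Hmap hn (a - x).2 hker
    have haxD : a - x = (((a - x : DST n) : ℕ → ℕ → ZMod 2) 1 2) • famvD n 0 := by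
      apply Subtype.ext
      conv_lhs => rw [hax]
      show _ • Un n = _ • famv n 0
      rw [famv_zero]
    have hsplit : a = x + (a - x) := by abel
    rw [hsplit]
    apply Submodule.add_mem
    · apply Submodule.sum_mem
      intro j _
      exact Submodule.smul_mem _ _ (Submodule.subset_span ⟨j.succ, rfl⟩)
    · rw [haxD]
      exact Submodule.smul_mem _ _ (Submodule.subset_span ⟨0, rfl⟩)
  refine ⟨(Module.Basis.mk hindep hsp).reindex (finCongr hMn.symm), fun i => ?_⟩
  rw [Module.Basis.reindex_apply, Module.Basis.mk_apply]
  rfl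

end Steinhaus

namespace Steinhaus

lemma main_basis (n : ℕ) : ∃ b : Module.Basis (Fin (md n)) (ZMod 2) (DST n),
    ∀ i : Fin (md n), (b i : ℕ → ℕ → ZMod 2) = famv n i := by
  induction n using Nat.strong_induction_on with
  | _ n IH =>
  rcases lt_or_ge n 3 with hlt | hn
  · interval_cases n
    · exact DST_trivial_basis (by decide) DST_zero_triv
    · -- n = 1
      have h1 : md 1 = 1 := by decide
      set u1 : DST 1 := ⟨Un 1, Un_mem_DST 1⟩ with hu1
      have hne : u1 ≠ 0 := fun h => Un_one_ne_zero (congrArg Subtype.val h)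
      haveI : Unique (Fin (md 1)) := by rw [h1]; infer_instance
      set v : Fin (md 1) → DST 1 := fun _ => u1 with hv
      have hindep : LinearIndependent (ZMod 2) v :=
        linearIndependent_unique_iff.mpr hne
      have hsp : ⊤ ≤ Submodule.span (ZMod 2) (Set.range v) := by
        intro a _
        have key : (a : ℕ → ℕ → ZMod 2) = ((a : ℕ → ℕ → ZMod 2) 1 1) • Un 1 := by
          refine ST_ext a.2.1
            (Submodule.smul_mem _ _ (Un_mem_DST 1).1) (fun j hj1 hj2 => ?_)
          have hj : j = 1 := by omega
          subst hj
          simp only [Pi.smul_apply]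
          have hval : ((if (1:ℕ) = 1 then (1:ZMod 2) else 0)
              + (if (1:ℕ) = 1 then 1 else 0) + if (1:ℕ) = 1 then 1 else 0) = 1 := by
            decide
          rw [Un_entry (⟨le_rfl, le_rfl, le_rfl⟩ : InTri 1 1 1), hval, smul_eq_mul,
            mul_one]
        have ha2 : a = ((a : ℕ → ℕ → ZMod 2) 1 1) • u1 := Subtype.ext key
        rw [ha2]
        exact Submodule.smul_mem _ _ (Submodule.subset_span ⟨default, rfl⟩)
      refine ⟨Module.Basis.mk hindep hsp, fun i => ?_⟩
      rw [Module.Basis.mk_apply]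
      show (Un 1 : ℕ → ℕ → ZMod 2) = famv 1 i.val
      have hi0 : (i : ℕ) = 0 := by have := i.isLt; omega
      rw [hi0, famv_zero]
    · exact DST_trivial_basis (by decide) DST_two_triv
  · obtain ⟨b', hb'⟩ := IH (n-3) (by omega)
    rcases Nat.mod_two_eq_zero_or_one n with hpar | hpar
    · -- n even
      have hmd : md n = md (n-3) := md_step_even hn hpar
      have hm'pos : 1 ≤ md (n-3) := by rw [← hmd]; exact md_pos hn
      obtain ⟨M, hM⟩ : ∃ M, md (n-3) = M + 1 := ⟨md (n-3) - 1, by omega⟩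
      have hMn : md n = M + 1 := by omega
      have hσb : ∀ j : Fin M, ((j : ℕ) + 1) < md (n-3) := fun j => by
        have := j.isLt; omega
      set σ : Fin M → Fin (md (n-3)) := fun j => ⟨j.val + 1, hσb j⟩ with hσ
      have hσinj : Function.Injective σ := by
        intro x y h
        have h2 : x.val + 1 = y.val + 1 := congrArg Fin.val h
        exact Fin.ext (by omega)
      have hi0b : 0 < md (n-3) := by omega
      set i0 : Fin (md (n-3)) := ⟨0, hi0b⟩ with hi0
      refine build hn hMn (fun j => b' (σ j)) (b'.linearIndependent.comp σ hσinj)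
        ?_ ?_
      · intro j
        apply Subtype.ext
        show Hmap n (famv n (j.val + 1)) = _
        rw [Hmap_famv_even hn hpar (j.val+1) (by omega), hb' (σ j)]
      · intro a
        have hrepr := Module.Basis.sum_repr b' (Hlin n a)
        set c := b'.repr (Hlin n a) with hc
        have hphi0 : ∀ i : Fin (md (n-3)), i ≠ i0 → philin (n-3) (b' i) = 0 := by
          intro i hne
          have hval : 1 ≤ i.val := by
            rcases Nat.eq_zero_or_pos i.val with h | h
            · exact absurd (Fin.ext h : i = i0) hne
            · exact h
          show seqSum (n-3) (((b' i : DST (n-3)) : ℕ → ℕ → ZMod 2) 1) = 0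
          rw [hb' i, ← Hmap_famv_even hn hpar i.val hval]
          exact seqSum_Hmap hn (famv_mem_DST n i.val)
        have hphii0 : philin (n-3) (b' i0) = 1 := by
          show seqSum (n-3) (((b' i0 : DST (n-3)) : ℕ → ℕ → ZMod 2) 1) = 1
          rw [hb' i0]
          rw [show famv (n-3) (i0.val) = Un (n-3) from famv_zero (n-3)]
          exact seqSum_Un_odd (by omega) (by omega)
        have hZ : philin (n-3) (Hlin n a) = 0 := seqSum_Hmap hn a.2
        have hc0 : c i0 = 0 := by
          have h1 : philin (n-3) (Hlin n a) = c i0 := by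
            rw [← hrepr, map_sum]
            simp only [map_smul]
            rw [Finset.sum_eq_single i0]
            · rw [hphii0, smul_eq_mul, mul_one]
            · intro i _ hne
              rw [hphi0 i hne, smul_zero]
            · intro h; exact absurd (Finset.mem_univ i0) h
          exact h1.symm.trans hZ
        rw [← hrepr]
        apply Submodule.sum_mem
        intro i _
        rcases eq_or_ne i i0 with h | h
        · rw [h, hc0, zero_smul]
          exact Submodule.zero_mem _
        · apply Submodule.smul_mem
          apply Submodule.subset_span
          have hval : 1 ≤ i.val := by
            rcases Nat.eq_zero_or_pos i.val with h2 | h2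
            · exact absurd (Fin.ext h2 : i = i0) h
            · exact h2
          refine ⟨⟨i.val - 1, by have := i.isLt; omega⟩, ?_⟩
          show b' (σ _) = b' i
          congr 1
          apply Fin.ext
          show (i.val - 1) + 1 = i.val
          omega
    · -- n odd
      have hmd : md n = md (n-3) + 1 := md_step_odd hn hpar
      refine build hn hmd b' b'.linearIndependent ?_ ?_
      · intro j
        apply Subtype.ext
        show Hmap n (famv n (j.val + 1)) = _
        rw [Hmap_famv_odd hn hpar j.val, hb' j]
      · intro a
        rw [b'.span_eq]
        trivial

end Steinhaus

namespace Steinhaus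

/-- Theorem 8. With `m = ⌊(n+3)/6⌋ + δ_{1,(n mod 6)}` and, for
every `k ∈ {0,…,⌊n/3⌋-1}` of the same parity as `n`,
`∇_k = ρ(∇(bs_n(k, (k-n)/2)))` — whose `(i,j)`-entry is
`C((k-n)/2+j-i, k+1-i) + C((k+n)/2-j, k+i-j) + C((k-n)/2+i-1, k+j-n) mod 2` —
the set `{∇_{2k} : 0 ≤ k ≤ m-1}` is a basis of `DST(n)` when `n` is even, and
`{U_n} ∪ {∇_{2k+1} : 0 ≤ k ≤ m-2}` is a basis of `DST(n)` when `n` is odd.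
Here `T k` denotes `∇(bs_n(k, (k-n)/2))` and `u` denotes `∇((1)_n)`, so that
`U_n = ρ(u)`. -/
theorem statement16 (n m : ℕ) (hm : m = (n + 3) / 6 + if n % 6 = 1 then 1 else 0)
    (T : ℕ → ℕ → ℕ → ZMod 2)
    (hT : ∀ k, k < n / 3 → k % 2 = n % 2 →
      T k ∈ ST n ∧ FirstRow n (T k) (bseq (k : ℤ) (((k : ℤ) - (n : ℤ)) / 2)))
    (u : ℕ → ℕ → ZMod 2) (hu : u ∈ ST n) (hurow : FirstRow n u (fun _ => 1)) :
    (∀ k, k < n / 3 → k % 2 = n % 2 → ∀ i j, 1 ≤ i → i ≤ j → j ≤ n →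
      rho n (T k) i j =
        ((ibinom (((k : ℤ) - (n : ℤ)) / 2 + (j : ℤ) - (i : ℤ)) ((k : ℤ) + 1 - (i : ℤ)) +
          ibinom (((k : ℤ) + (n : ℤ)) / 2 - (j : ℤ)) ((k : ℤ) + (i : ℤ) - (j : ℤ)) +
          ibinom (((k : ℤ) - (n : ℤ)) / 2 + (i : ℤ) - 1) ((k : ℤ) + (j : ℤ) - (n : ℤ)) : ℤ) : ZMod 2)) ∧
    (n % 2 = 0 →
      ∃ b : Module.Basis (Fin m) (ZMod 2) (DST n),
        ∀ k : Fin m, (b k : ℕ → ℕ → ZMod 2) = rho n (T (2 * (k : ℕ)))) ∧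
    (n % 2 = 1 →
      ∃ b : Module.Basis (Fin m) (ZMod 2) (DST n),
        ∀ k : Fin m, (b k : ℕ → ℕ → ZMod 2) =
          if (k : ℕ) = 0 then rho n u else rho n (T (2 * ((k : ℕ) - 1) + 1))) := by
  have hmmd : m = md n := hm
  refine ⟨?_, ?_, ?_⟩
  · -- entry formula
    intro k hk hkp i j hi hij hjn
    have hTk : T k = nab n (bseq (k:ℤ) (((k:ℤ) - (n:ℤ))/2)) :=
      eq_nab (hT k hk hkp).1 (hT k hk hkp).2
    have hWk : rho n (T k) = Wk n (k:ℤ) := by rw [hTk]; rfl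
    rw [hWk, Wk_entry n (k:ℤ) (by omega) i j hi hij hjn]
  · -- n even
    intro hpar
    obtain ⟨b, hb⟩ := main_basis n
    refine ⟨b.reindex (finCongr hmmd.symm), fun k => ?_⟩
    rw [Module.Basis.reindex_apply, hb]
    show famv n (k:ℕ) = rho n (T (2 * (k:ℕ)))
    have hklt : (k:ℕ) < m := k.isLt
    have hm2 : m = (n + 3) / 6 := by rw [hm, if_neg (by omega)]; omega
    rcases Nat.eq_zero_or_pos (k:ℕ) with h0 | h1
    · rw [h0, famv_zero]
      have hbound : 0 < n / 3 := by omega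
      have hT0 : T 0 = nab n (bseq ((0:ℕ):ℤ) ((((0:ℕ):ℤ) - (n:ℤ))/2)) :=
        eq_nab (hT 0 hbound (by omega)).1 (hT 0 hbound (by omega)).2
      rw [show 2 * (0:ℕ) = 0 from rfl, hT0]
      unfold Un
      rw [show ((0:ℕ):ℤ) = (0:ℤ) from rfl, bseq_zero]
    · have hbound : 2 * (k:ℕ) < n / 3 := by omega
      have h2 := hT (2*(k:ℕ)) hbound (by omega)
      have hTk := eq_nab h2.1 h2.2
      unfold famv
      rw [if_neg (by omega),
        show (2 * (((k:ℕ)):ℤ) - ((n % 2 : ℕ):ℤ)) = (((2*(k:ℕ) : ℕ)):ℤ) from by omega,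
        hTk]
      rfl
  · -- n odd
    intro hpar
    obtain ⟨b, hb⟩ := main_basis n
    refine ⟨b.reindex (finCongr hmmd.symm), fun k => ?_⟩
    rw [Module.Basis.reindex_apply, hb]
    show famv n (k:ℕ) = _
    have hklt : (k:ℕ) < m := k.isLt
    rcases Nat.eq_zero_or_pos (k:ℕ) with h0 | h1
    · rw [h0, famv_zero, if_pos rfl]
      have hu2 : u = nab n (fun _ => 1) := eq_nab hu hurow
      rw [hu2]
      rfl
    · rw [if_neg (by omega)]
      have hbound : 2 * ((k:ℕ) - 1) + 1 < n / 3 := by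
        by_cases h6 : n % 6 = 1
        · rw [if_pos h6] at hm; omega
        · rw [if_neg h6] at hm; omega
      have h2 := hT (2*((k:ℕ)-1)+1) hbound (by omega)
      have hTk := eq_nab h2.1 h2.2
      unfold famv
      rw [if_neg (by omega),
        show (2 * (((k:ℕ)):ℤ) - ((n % 2 : ℕ):ℤ)) = (((2*((k:ℕ)-1)+1 : ℕ)):ℤ) from by omega,
        hTk]
      rfl

end Steinhaus
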